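/- Let A be a real n×k matrix with full column rank k (so that AᵀA is invertible) and let V be a symmetric positive definite k×k real matrix. Then the matrix N = A (AᵀA)⁻¹ V⁻¹ (AᵀA)⁻¹ Aᵀ is a Moore–Penrose pseudoinverse of A V Aᵀ; that is, N satisfies the four Penrose equations with M = A V Aᵀ. -/
import Mathlib

open Matrix

lemma isUnit_of_rank_eq {k : ℕ} (B : Matrix (Fin k) (Fin k) ℝ) (h : B.rank = k) :
    IsUnit B := by
  rw [← Matrix.mulVec_surjective_iff_isUnit]
  have htop : LinearMap.range B.mulVecLin = ⊤ := by
    apply Submodule.eq_top_of_finrank_eq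
    rw [← Matrix.rank, h]
    simp
  intro y
  have := LinearMap.range_eq_top.mp htop y
  simpa using this

/-- `N` is a Moore–Penrose pseudoinverse of `M`: the four Penrose equations hold. -/
def IsMoorePenrose {n m : ℕ} (M : Matrix (Fin n) (Fin m) ℝ)
    (N : Matrix (Fin m) (Fin n) ℝ) : Prop :=
  M * N * M = M ∧ N * M * N = N ∧ (M * N)ᵀ = M * N ∧ (N * M)ᵀ = N * M

/-- If `A` has full column rank `k` and `V` is symmetric positive definite, then
`A (AᵀA)⁻¹ V⁻¹ (AᵀA)⁻¹ Aᵀ` is a Moore–Penrose pseudoinverse of `A V Aᵀ`. -/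
theorem isMoorePenrose_of_embedding {n k : ℕ}
    (A : Matrix (Fin n) (Fin k) ℝ) (hA : A.rank = k)
    (V : Matrix (Fin k) (Fin k) ℝ) (hV : V.PosDef) :
    IsMoorePenrose (A * V * Aᵀ)
      (A * (Aᵀ * A)⁻¹ * V⁻¹ * (Aᵀ * A)⁻¹ * Aᵀ) := by
  set B := Aᵀ * A with hB
  have hBu : IsUnit B := isUnit_of_rank_eq B (by rw [hB, Matrix.rank_transpose_mul_self, hA])
  have hBd : IsUnit B.det := (Matrix.isUnit_iff_isUnit_det B).mp hBu
  have hVd : IsUnit V.det := (Matrix.isUnit_iff_isUnit_det V).mp hV.isUnit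
  have hBi : B * B⁻¹ = 1 := Matrix.mul_nonsing_inv B hBd
  have hiB : B⁻¹ * B = 1 := Matrix.nonsing_inv_mul B hBd
  have hVi : V * V⁻¹ = 1 := Matrix.mul_nonsing_inv V hVd
  have hiV : V⁻¹ * V = 1 := Matrix.nonsing_inv_mul V hVd
  have hBsymm : Bᵀ = B := by rw [hB]; simp [Matrix.transpose_mul]
  have hBisymm : (B⁻¹)ᵀ = B⁻¹ := by rw [Matrix.transpose_nonsing_inv, hBsymm]
  have hVsymm : Vᵀ = V := hV.1.eq
  have hVisymm : (V⁻¹)ᵀ = V⁻¹ := by rw [Matrix.transpose_nonsing_inv, hVsymm]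
  -- key: both M*N and N*M equal the projection P = A * B⁻¹ * Aᵀ
  have hMN : (A * V * Aᵀ) * (A * B⁻¹ * V⁻¹ * B⁻¹ * Aᵀ) = A * B⁻¹ * Aᵀ := by
    simp only [Matrix.mul_assoc]
    rw [← Matrix.mul_assoc Aᵀ A, ← hB, ← Matrix.mul_assoc B B⁻¹, hBi, Matrix.one_mul,
      ← Matrix.mul_assoc V V⁻¹, hVi, Matrix.one_mul]
  have hNM : (A * B⁻¹ * V⁻¹ * B⁻¹ * Aᵀ) * (A * V * Aᵀ) = A * B⁻¹ * Aᵀ := by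
    simp only [Matrix.mul_assoc]
    rw [← Matrix.mul_assoc Aᵀ A, ← hB, ← Matrix.mul_assoc B⁻¹ B, hiB, Matrix.one_mul,
      ← Matrix.mul_assoc V⁻¹ V, hiV, Matrix.one_mul]
  have hPsymm : (A * B⁻¹ * Aᵀ)ᵀ = A * B⁻¹ * Aᵀ := by
    simp [Matrix.transpose_mul, hBisymm, Matrix.mul_assoc]
  refine ⟨?_, ?_, ?_, ?_⟩
  · rw [hMN]
    simp only [Matrix.mul_assoc]
    rw [← Matrix.mul_assoc Aᵀ A, ← hB, ← Matrix.mul_assoc B⁻¹ B, hiB, Matrix.one_mul]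
  · rw [hNM]
    simp only [Matrix.mul_assoc]
    rw [← Matrix.mul_assoc Aᵀ A, ← hB, ← Matrix.mul_assoc B⁻¹ B, hiB, Matrix.one_mul]
  · rw [hMN, hPsymm]
  · rw [hNM, hPsymm]
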